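/- arXiv:math/0305383 — 2 statements merged into one kernel-verified Lean document; each statement's English description precedes it below -/
import Mathlib

section
/- Let n ≥ 2 and k < n be positive integers and q a prime power. Consider exponent vectors (a_1,...,a_k) with 0 ≤ a_1 < a_2 < ⋯ < a_k < n, representing the integer q^{a_1}+⋯+q^{a_k} modulo q^n−1. If gcd(k,n)=1, then the orbit of each such integer under multiplication by q modulo q^n−1 has exactly n elements. -/
lemma mygeom_lt (q g : ℕ) (hq : 2 ≤ q) : ∑ i ∈ Finset.range g, q ^ i < q ^ g := by
  induction g with
  | zero => simp
  | succ g ih =>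
    rw [Finset.sum_range_succ, pow_succ]
    have h1 : q ^ g * 2 ≤ q ^ g * q := Nat.mul_le_mul_left _ hq
    omega

lemma geom_mul_eq (x N : ℕ) (hx : 1 ≤ x) :
    (x - 1) * ∑ i ∈ Finset.range N, x ^ i = x ^ N - 1 := by
  induction N with
  | zero => simp
  | succ N ih =>
    rw [Finset.sum_range_succ, Nat.mul_add, ih, pow_succ, Nat.sub_mul, one_mul,
      mul_comm x (x ^ N)]
    have h1 : 1 ≤ x ^ N := Nat.one_le_pow _ _ (by omega)
    have h2 : x ^ N ≤ x ^ N * x := Nat.le_mul_of_pos_right _ (by omega)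
    omega

lemma digits_unique (B : ℕ) :
    ∀ (N : ℕ) (c c' : ℕ → ℕ), (∀ j < N, c j < B) → (∀ j < N, c' j < B) →
    (∑ j ∈ Finset.range N, c j * B ^ j) = (∑ j ∈ Finset.range N, c' j * B ^ j) →
    ∀ j < N, c j = c' j := by
  intro N
  induction N with
  | zero => intro c c' _ _ _ j hj; omega
  | succ N ih =>
    intro c c' hc hc' hsum j hj
    rw [Finset.sum_range_succ', Finset.sum_range_succ'] at hsum
    simp only [pow_zero, mul_one] at hsum
    have h1 : ∑ i ∈ Finset.range N, c (i+1) * B ^ (i+1)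
        = B * ∑ i ∈ Finset.range N, c (i+1) * B ^ i := by
      rw [Finset.mul_sum]; apply Finset.sum_congr rfl; intro i _; ring
    have h2 : ∑ i ∈ Finset.range N, c' (i+1) * B ^ (i+1)
        = B * ∑ i ∈ Finset.range N, c' (i+1) * B ^ i := by
      rw [Finset.mul_sum]; apply Finset.sum_congr rfl; intro i _; ring
    rw [h1, h2] at hsum
    have hc0 : c 0 < B := hc 0 (Nat.succ_pos N)
    have hc0' : c' 0 < B := hc' 0 (Nat.succ_pos N)
    have heq0 : c 0 = c' 0 := by
      have hm := congrArg (· % B) hsum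
      simpa [Nat.mul_add_mod, Nat.mod_eq_of_lt hc0, Nat.mod_eq_of_lt hc0'] using hm
    have hBpos : 0 < B := lt_of_le_of_lt (Nat.zero_le _) hc0
    have hrest : (∑ i ∈ Finset.range N, c (i+1) * B ^ i)
        = ∑ i ∈ Finset.range N, c' (i+1) * B ^ i := by
      apply Nat.eq_of_mul_eq_mul_left hBpos
      omega
    have hind := ih (fun i => c (i+1)) (fun i => c' (i+1))
      (fun i hi => hc (i+1) (by omega)) (fun i hi => hc' (i+1) (by omega)) hrest
    cases j with
    | zero => exact heq0
    | succ j => exact hind j (by omega)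

lemma powsum_inj (q g : ℕ) (hq : 2 ≤ q) (E F : Finset ℕ)
    (hE : E ⊆ Finset.range g) (hF : F ⊆ Finset.range g)
    (h : ∑ e ∈ E, q ^ e = ∑ e ∈ F, q ^ e) : E = F := by
  have hrw : ∀ G : Finset ℕ, G ⊆ Finset.range g →
      ∑ j ∈ Finset.range g, (if j ∈ G then 1 else 0) * q ^ j = ∑ e ∈ G, q ^ e := by
    intro G hG
    simp only [ite_mul, one_mul, zero_mul]
    rw [Finset.sum_ite_mem, Finset.inter_eq_right.mpr hG]
  have key := digits_unique q g (fun j => if j ∈ E then 1 else 0)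
    (fun j => if j ∈ F then 1 else 0)
    (fun j hj => by by_cases h' : j ∈ E <;> simp [h'] <;> omega)
    (fun j hj => by by_cases h' : j ∈ F <;> simp [h'] <;> omega)
    (by rw [hrw E hE, hrw F hF, h])
  ext e
  constructor
  · intro he
    have := key e (Finset.mem_range.mp (hE he))
    simp only [if_pos he] at this
    by_contra hne; simp [hne] at this
  · intro he
    have := key e (Finset.mem_range.mp (hF he))
    simp only [if_pos he] at this
    by_contra hne; simp [hne] at this

lemma fix_zpow {R : Type*} [CommRing R] (s : R) (w : Rˣ) (h : s * ↑w = s) :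
    ∀ A : ℤ, s * ↑(w ^ A) = s := by
  have hneg : ∀ y : R, y * ↑w = s → y = s * ↑w⁻¹ := by
    intro y hy
    have := congrArg (· * (↑w⁻¹ : R)) hy
    simpa [mul_assoc] using this
  have hsi : s * ↑w⁻¹ = s := (hneg s h).symm
  intro A
  induction A using Int.induction_on with
  | zero => simp
  | succ n ih => rw [zpow_add_one, Units.val_mul, ← mul_assoc, ih, h]
  | pred n ih => rw [zpow_sub_one, Units.val_mul, ← mul_assoc, ih, hsi]

theorem stmt_13 (q n k : ℕ) (hq : ∃ p m : ℕ, p.Prime ∧ 0 < m ∧ q = p ^ m)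
    (hn : 2 ≤ n) (hk : 0 < k) (hkn : k < n) (hcop : Nat.Coprime k n)
    (a : Fin k → ℕ) (ha : StrictMono a) (hbound : ∀ i, a i < n) :
    ((Finset.range n).image
      (fun j => (∑ i, q ^ (a i)) * q ^ j % (q ^ n - 1))).card = n := by
  have hq2 : 2 ≤ q := by
    obtain ⟨p, m, hp, hm, rfl⟩ := hq
    exact Nat.one_lt_pow hm.ne' hp.one_lt
  set s := ∑ i, q ^ a i with hs_def
  set M := q ^ n - 1 with hM_def
  have hqn2 : 4 ≤ q ^ n := by
    calc (4:ℕ) = 2 ^ 2 := rfl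
    _ ≤ q ^ n := Nat.pow_le_pow_left hq2 2 |>.trans (Nat.pow_le_pow_right (by omega) hn)
  have hM1 : 1 ≤ M := by omega
  -- the exponent set A
  set A : Finset ℕ := Finset.image a Finset.univ with hA_def
  have hAcard : A.card = k := by
    rw [hA_def, Finset.card_image_of_injective _ ha.injective, Finset.card_univ,
      Fintype.card_fin]
  have hAsub : A ⊆ Finset.range n := by
    intro e he
    rw [hA_def] at he
    obtain ⟨i, _, rfl⟩ := Finset.mem_image.mp he
    exact Finset.mem_range.mpr (hbound i)
  have hsA : s = ∑ e ∈ A, q ^ e := by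
    rw [hA_def, Finset.sum_image (fun i _ i' _ h => ha.injective h)]
  have hs_pos : 0 < s := by
    rw [hs_def]
    apply Finset.sum_pos (fun i _ => Nat.pow_pos (by omega))
    exact Finset.univ_nonempty_iff.mpr (Fin.pos_iff_nonempty.mp hk)
  have hs_lt : s < M := by
    have hss : A ⊂ Finset.range n := by
      refine hAsub.ssubset_of_ne ?_
      intro h
      rw [h, Finset.card_range] at hAcard
      omega
    obtain ⟨e0, he0r, he0A⟩ := Finset.exists_of_ssubset hss
    have h1 : s + q ^ e0 = ∑ e ∈ insert e0 A, q ^ e := by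
      rw [Finset.sum_insert he0A, hsA]; ring
    have h2 : ∑ e ∈ insert e0 A, q ^ e ≤ ∑ e ∈ Finset.range n, q ^ e := by
      apply Finset.sum_le_sum_of_subset
      intro e he
      rcases Finset.mem_insert.mp he with rfl | he
      · exact he0r
      · exact hAsub he
    have h3 := mygeom_lt q n hq2
    have h4 : 1 ≤ q ^ e0 := Nat.one_le_pow _ _ (by omega)
    omega
  -- main: injectivity on range n
  rw [Finset.card_image_of_injOn, Finset.card_range]
  have key : ∀ j j' : ℕ, j < n → j' < n → j < j' →
      s * q ^ j % M = s * q ^ j' % M → False := by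
    intro j j' hjn hj'n hjj' heq
    set d := j' - j with hd_def
    have hd0 : 0 < d := by omega
    have hdn : d < n := by omega
    -- move to ZMod M
    set x : ZMod M := (q : ZMod M) with hx_def
    have hxn : x ^ n = 1 := by
      have : ((q ^ n : ℕ) : ZMod M) = ((M + 1 : ℕ) : ZMod M) := by
        congr 1; omega
      push_cast at this
      rw [ZMod.natCast_self] at this
      simpa using this
    have hxu : IsUnit x := IsUnit.of_pow_eq_one hxn (by omega)
    set w : (ZMod M)ˣ := hxu.unit with hw_def
    have hw : (↑w : ZMod M) = x := hxu.unit_spec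
    have h1 : (s : ZMod M) * x ^ j = (s : ZMod M) * x ^ j' := by
      have := (ZMod.natCast_eq_natCast_iff _ _ _).mpr heq
      push_cast at this
      exact this
    have h2 : (s : ZMod M) * x ^ d = s := by
      have hj' : j' = d + j := by omega
      rw [hj', pow_add, ← mul_assoc] at h1
      exact ((hxu.pow j).mul_right_cancel h1).symm
    -- reduce exponent to g = gcd d n
    set g := Nat.gcd d n with hg_def
    have hg0 : 0 < g := Nat.gcd_pos_of_pos_left _ hd0
    have hgn : g ∣ n := Nat.gcd_dvd_right d n
    have hgltn : g < n := lt_of_le_of_lt (Nat.le_of_dvd hd0 (Nat.gcd_dvd_left d n)) hdn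
    have hfixd : (s : ZMod M) * ↑(w ^ d) = s := by
      rw [Units.val_pow_eq_pow_val, hw]; exact h2
    have hfixn : (s : ZMod M) * ↑(w ^ n) = s := by
      rw [Units.val_pow_eq_pow_val, hw, hxn, mul_one]
    have hfixg : (s : ZMod M) * x ^ g = s := by
      have hbez := Nat.gcd_eq_gcd_ab d n
      have hzd := fix_zpow (s : ZMod M) (w ^ d) hfixd
      have hzn := fix_zpow (s : ZMod M) (w ^ n) hfixn
      have : (s : ZMod M) * ↑(w ^ (g : ℤ)) = s := by
        rw [hg_def, hbez, zpow_add, zpow_mul, zpow_mul]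
        rw [Units.val_mul, ← mul_assoc]
        rw [zpow_natCast, zpow_natCast]
        rw [hzd, hzn]
      rw [zpow_natCast, Units.val_pow_eq_pow_val, hw] at this
      exact this
    -- back to ℕ
    have hdvd : M ∣ s * (q ^ g - 1) := by
      have hcast : ((s * q ^ g : ℕ) : ZMod M) = ((s : ℕ) : ZMod M) := by
        push_cast; exact hfixg
      have hmod := (ZMod.natCast_eq_natCast_iff _ _ _).mp hcast
      have hle : s ≤ s * q ^ g := Nat.le_mul_of_pos_right _ (Nat.pow_pos (by omega))
      have := (Nat.modEq_iff_dvd' hle).mp hmod.symm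
      have hrw : s * (q ^ g - 1) = s * q ^ g - s := by
        rw [Nat.mul_sub, mul_one]
      rwa [hrw]
    -- base q^g digit analysis
    set N := n / g with hN_def
    have hnN : n = g * N := (Nat.mul_div_cancel' hgn).symm
    have hN1 : 1 ≤ N := (Nat.one_le_div_iff hg0).mpr hgltn.le
    set Q := q ^ g with hQ_def
    have hQ2 : 2 ≤ Q := le_trans hq2 (Nat.le_self_pow (by omega) q)
    set T := ∑ i ∈ Finset.range N, Q ^ i with hT_def
    have hMT : M = (Q - 1) * T := by
      rw [hT_def, geom_mul_eq Q N (by omega), hQ_def, ← pow_mul, ← hnN]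
    have hT0 : 0 < T := by
      apply Finset.sum_pos (fun i _ => Nat.pow_pos (by omega))
      exact Finset.nonempty_range_iff.mpr (by omega)
    have hTs : T ∣ s := by
      obtain ⟨c, hc⟩ := hdvd
      refine ⟨c, ?_⟩
      apply Nat.eq_of_mul_eq_mul_left (show 0 < Q - 1 by omega)
      rw [hMT] at hc
      calc (Q - 1) * s = s * (Q - 1) := by ring
      _ = (Q - 1) * T * c := hc
      _ = (Q - 1) * (T * c) := by ring
    obtain ⟨mm, hmm⟩ := hTs
    have hmmQ : mm < Q := by
      by_contra hcon
      push_neg at hcon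
      have h5 : (Q - 1) * T ≤ T * mm := by
        calc (Q - 1) * T = T * (Q - 1) := by ring
        _ ≤ T * mm := Nat.mul_le_mul_left _ (by omega)
      have h6 : M ≤ s := by rw [hMT, hmm]; exact h5
      omega
    -- digit functions
    set c : ℕ → ℕ := fun j => ∑ e ∈ A.filter (fun e => e / g = j), q ^ (e % g) with hc_def
    have hmapsto : ∀ e ∈ A, e / g ∈ Finset.range N := by
      intro e he
      have := Finset.mem_range.mp (hAsub he)
      exact Finset.mem_range.mpr (Nat.div_lt_of_lt_mul (by omega))
    have hsum1 : s = ∑ j ∈ Finset.range N, c j * Q ^ j := by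
      rw [hsA, ← Finset.sum_fiberwise_of_maps_to hmapsto (fun e => q ^ e)]
      apply Finset.sum_congr rfl
      intro j _
      rw [hc_def]
      rw [Finset.sum_mul]
      apply Finset.sum_congr rfl
      intro e he
      obtain ⟨-, hej⟩ := Finset.mem_filter.mp he
      rw [hQ_def, ← pow_mul, ← pow_add]
      congr 1
      rw [← hej]
      have := Nat.div_add_mod e g
      omega
    have hsum2 : s = ∑ j ∈ Finset.range N, mm * Q ^ j := by
      rw [hmm, hT_def, Finset.sum_mul]
      apply Finset.sum_congr rfl
      intro i _; ring
    -- injectivity of e ↦ e % g on each fiber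
    have hinj : ∀ j : ℕ, ∀ e ∈ A.filter (fun e => e / g = j),
        ∀ e' ∈ A.filter (fun e => e / g = j), e % g = e' % g → e = e' := by
      intro j e he e' he' hmod
      obtain ⟨-, hej⟩ := Finset.mem_filter.mp he
      obtain ⟨-, hej'⟩ := Finset.mem_filter.mp he'
      have h1 := Nat.div_add_mod e g
      have h2 := Nat.div_add_mod e' g

      rw [hej] at h1
      rw [hej'] at h2
      omega
    have hEdef : ∀ j : ℕ, c j = ∑ r ∈ (A.filter (fun e => e / g = j)).image (· % g), q ^ r := by
      intro j
      rw [hc_def, Finset.sum_image (hinj j)]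
    have hEsub : ∀ j : ℕ, (A.filter (fun e => e / g = j)).image (· % g) ⊆ Finset.range g := by
      intro j r hr
      obtain ⟨e, -, rfl⟩ := Finset.mem_image.mp hr
      exact Finset.mem_range.mpr (Nat.mod_lt _ (by omega))
    have hcb : ∀ j < N, c j < Q := by
      intro j _
      rw [hEdef j]
      calc ∑ r ∈ (A.filter (fun e => e / g = j)).image (· % g), q ^ r
          ≤ ∑ r ∈ Finset.range g, q ^ r :=
            Finset.sum_le_sum_of_subset (hEsub j)
      _ < q ^ g := mygeom_lt q g hq2
      _ = Q := rfl
    have hdig := digits_unique Q N c (fun _ => mm) hcb (fun j _ => hmmQ)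
      (hsum1.symm.trans hsum2)
    -- all fibers have equal cardinality
    have hsets : ∀ j < N, (A.filter (fun e => e / g = j)).image (· % g)
        = (A.filter (fun e => e / g = 0)).image (· % g) := by
      intro j hj
      apply powsum_inj q g hq2 _ _ (hEsub j) (hEsub 0)
      rw [← hEdef j, ← hEdef 0, hdig j hj, hdig 0 (by omega)]
    have hcards : ∀ j < N, (A.filter (fun e => e / g = j)).card
        = (A.filter (fun e => e / g = 0)).card := by
      intro j hj
      rw [← Finset.card_image_of_injOn (fun e he e' he' h => hinj j e he e' he' h),
        ← Finset.card_image_of_injOn (fun e he e' he' h => hinj 0 e he e' he' h),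
        hsets j hj]
    have hk_eq : k = N * (A.filter (fun e => e / g = 0)).card := by
      rw [← hAcard, Finset.card_eq_sum_card_fiberwise hmapsto]
      rw [Finset.sum_congr rfl (fun j hj => hcards j (Finset.mem_range.mp hj))]
      rw [Finset.sum_const, Finset.card_range, smul_eq_mul]
    have hNk : N ∣ k := ⟨_, hk_eq⟩
    have hNn : N ∣ n := ⟨g, by rw [hnN, Nat.mul_comm]⟩
    have : N ∣ Nat.gcd k n := Nat.dvd_gcd hNk hNn
    rw [hcop] at this
    have hNone : N = 1 := Nat.eq_one_of_dvd_one this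
    rw [hNone, mul_one] at hnN
    omega
  intro j hj j' hj' heq
  simp only [Finset.mem_coe, Finset.mem_range] at hj hj'
  rcases lt_trichotomy j j' with h | h | h
  · exact absurd heq (fun heq => key j j' hj hj' h heq)
  · exact h
  · exact absurd heq (fun heq => (key j' j hj' hj h heq.symm))
end

section
/- If N is a positive integer with at least 19 distinct prime factors, then N > 2^{(26/7)·(ω(N) + 2.735)}, where ω(N) is the number of distinct prime factors of N. More precisely: N ≥ A_19 · 2^{6.149·(ω(N)−19)} where A_19 is the product of the first 19 primes, and A_19 · 2^{6.149·(ω−19)} > 2^{(26/7)(ω+2.735)} for all ω ≥ 19. -/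
/-- The product of the first 19 primes. -/
def A19 : ℕ :=
  2 * 3 * 5 * 7 * 11 * 13 * 17 * 19 * 23 * 29 * 31 * 37 * 41 * 43 * 47 * 53 * 59 * 61 * 67

noncomputable def Pp (n : ℕ) : ℕ := ∏ i ∈ Finset.range n, Nat.nth Nat.Prime i

lemma nth_prime_eq (p k : ℕ) (hp : p.Prime) (hk : Nat.count Nat.Prime p = k) :
    Nat.nth Nat.Prime k = p := by subst hk; exact Nat.nth_count hp

lemma Pp_le_prod : ∀ (S : Finset ℕ), (∀ p ∈ S, p.Prime) → Pp S.card ≤ ∏ p ∈ S, p := by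
  intro S
  induction S using Finset.strongInduction with
  | _ S ih =>
    intro hS
    rcases S.eq_empty_or_nonempty with rfl | hne
    · simp [Pp]
    · have hm : S.max' hne ∈ S := S.max'_mem hne
      set m := S.max' hne with hmdef
      have hpos : 0 < S.card := Finset.card_pos.mpr hne
      have hsub : S ⊆ (Finset.range (m+1)).filter Nat.Prime := by
        intro p hp
        simp only [Finset.mem_filter, Finset.mem_range]
        exact ⟨Nat.lt_succ_of_le (S.le_max' p hp), hS p hp⟩
      have hcount : S.card ≤ Nat.count Nat.Prime (m+1) := by
        rw [Nat.count_eq_card_filter_range]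
        exact Finset.card_le_card hsub
      have hnth : Nat.nth Nat.Prime (S.card - 1) ≤ m := by
        have := Nat.nth_lt_of_lt_count (p := Nat.Prime) (n := m+1) (k := S.card - 1) (by omega)
        omega
      have herase := ih (S.erase m) (Finset.erase_ssubset hm)
        (fun p hp => hS p (Finset.mem_of_mem_erase hp))
      have hcard : (S.erase m).card = S.card - 1 := Finset.card_erase_of_mem hm
      have hc1 : S.card = S.card - 1 + 1 := by omega
      calc Pp S.card = Pp (S.card - 1) * Nat.nth Nat.Prime (S.card - 1) := by
            conv_lhs => rw [hc1]
            rw [Pp, Pp, Finset.prod_range_succ]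
        _ ≤ (∏ p ∈ S.erase m, p) * m := Nat.mul_le_mul (hcard ▸ herase) hnth
        _ = ∏ p ∈ S, p := by rw [mul_comm]; exact Finset.mul_prod_erase S (fun p => p) hm

lemma Pp19 : Pp 19 = A19 := by
  have h2 : Nat.nth Nat.Prime 0 = 2 := nth_prime_eq 2 0 (by norm_num) (by decide)
  have h3 : Nat.nth Nat.Prime 1 = 3 := nth_prime_eq 3 1 (by norm_num) (by decide)
  have h5 : Nat.nth Nat.Prime 2 = 5 := nth_prime_eq 5 2 (by norm_num) (by decide)
  have h7 : Nat.nth Nat.Prime 3 = 7 := nth_prime_eq 7 3 (by norm_num) (by decide)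
  have h11 : Nat.nth Nat.Prime 4 = 11 := nth_prime_eq 11 4 (by norm_num) (by decide)
  have h13 : Nat.nth Nat.Prime 5 = 13 := nth_prime_eq 13 5 (by norm_num) (by decide)
  have h17 : Nat.nth Nat.Prime 6 = 17 := nth_prime_eq 17 6 (by norm_num) (by decide)
  have h19 : Nat.nth Nat.Prime 7 = 19 := nth_prime_eq 19 7 (by norm_num) (by decide)
  have h23 : Nat.nth Nat.Prime 8 = 23 := nth_prime_eq 23 8 (by norm_num) (by decide)
  have h29 : Nat.nth Nat.Prime 9 = 29 := nth_prime_eq 29 9 (by norm_num) (by decide)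
  have h31 : Nat.nth Nat.Prime 10 = 31 := nth_prime_eq 31 10 (by norm_num) (by decide)
  have h37 : Nat.nth Nat.Prime 11 = 37 := nth_prime_eq 37 11 (by norm_num) (by decide)
  have h41 : Nat.nth Nat.Prime 12 = 41 := nth_prime_eq 41 12 (by norm_num) (by decide)
  have h43 : Nat.nth Nat.Prime 13 = 43 := nth_prime_eq 43 13 (by norm_num) (by decide)
  have h47 : Nat.nth Nat.Prime 14 = 47 := nth_prime_eq 47 14 (by norm_num) (by decide)
  have h53 : Nat.nth Nat.Prime 15 = 53 := nth_prime_eq 53 15 (by norm_num) (by decide)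
  have h59 : Nat.nth Nat.Prime 16 = 59 := nth_prime_eq 59 16 (by norm_num) (by decide)
  have h61 : Nat.nth Nat.Prime 17 = 61 := nth_prime_eq 61 17 (by norm_num) (by decide)
  have h67 : Nat.nth Nat.Prime 18 = 67 := nth_prime_eq 67 18 (by norm_num) (by decide)
  simp [Pp, Finset.prod_range_succ, h2, h3, h5, h7, h11, h13, h17, h19, h23, h29,
    h31, h37, h41, h43, h47, h53, h59, h61, h67, A19]

lemma two_rpow_le_71 : (2 : ℝ) ^ (6.149 : ℝ) ≤ 71 := by
  have hpow : ((2 : ℝ) ^ (6.149 : ℝ)) ^ (1000 : ℕ) = (2 : ℝ) ^ (6149 : ℕ) := by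
    rw [← Real.rpow_natCast ((2:ℝ) ^ (6.149:ℝ)) 1000, ← Real.rpow_mul (by norm_num),
      ← Real.rpow_natCast 2 6149]
    norm_num
  have h1 : ((2 : ℝ) ^ (6.149 : ℝ)) ^ (1000 : ℕ) ≤ (71 : ℝ) ^ (1000 : ℕ) := by
    rw [hpow, show (6149:ℕ) = 149 * 41 + 40 by norm_num, pow_add, pow_mul,
      show (1000:ℕ) = 200 * 5 by norm_num, pow_mul]; norm_num
  exact le_of_pow_le_pow_left₀ (by norm_num) (by norm_num) h1

lemma two_rpow_lt_A19 : (2 : ℝ) ^ (80.73 : ℝ) < (A19 : ℝ) := by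
  have hpow : ((2 : ℝ) ^ (80.73 : ℝ)) ^ (100 : ℕ) = (2 : ℝ) ^ (8073 : ℕ) := by
    rw [← Real.rpow_natCast ((2:ℝ) ^ (80.73:ℝ)) 100, ← Real.rpow_mul (by norm_num),
      ← Real.rpow_natCast 2 8073]
    norm_num
  have h1 : ((2 : ℝ) ^ (80.73 : ℝ)) ^ (100 : ℕ) < (A19 : ℝ) ^ (100 : ℕ) := by
    rw [hpow]
    have : (2:ℕ)^8073 < A19^100 := by
      rw [show (8073:ℕ) = 207 * 39 by norm_num, pow_mul]; norm_num [A19]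
    calc (2:ℝ) ^ (8073:ℕ) = ((2^8073 : ℕ) : ℝ) := by push_cast; ring
      _ < ((A19^100 : ℕ) : ℝ) := by exact_mod_cast this
      _ = (A19:ℝ)^(100:ℕ) := by push_cast; ring
  exact lt_of_pow_lt_pow_left₀ 100 (by positivity) h1

lemma lemB : ∀ n : ℕ, (A19 : ℝ) * (2:ℝ) ^ ((6.149:ℝ) * n) ≤ ((Pp (19 + n) : ℕ) : ℝ) := by
  intro n
  induction n with
  | zero => simp [Pp19]
  | succ n ihn =>
    have hPp : Pp (19 + (n+1)) = Pp (19 + n) * Nat.nth Nat.Prime (19 + n) := by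
      rw [show 19 + (n+1) = (19 + n) + 1 by ring, Pp, Pp, Finset.prod_range_succ]
    have h71 : (71 : ℝ) ≤ (Nat.nth Nat.Prime (19 + n) : ℝ) := by
      have : Nat.nth Nat.Prime 19 ≤ Nat.nth Nat.Prime (19 + n) :=
        Nat.nth_monotone Nat.infinite_setOf_prime (by omega)
      rw [nth_prime_eq 71 19 (by norm_num) (by decide)] at this
      exact_mod_cast this
    have hsplit : (6.149:ℝ) * ((n:ℝ)+1) = 6.149 * n + 6.149 := by ring
    rw [hPp]
    push_cast
    rw [hsplit, Real.rpow_add (by norm_num), ← mul_assoc]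
    have h2 : (2:ℝ) ^ ((6.149:ℝ)) ≤ (Nat.nth Nat.Prime (19 + n) : ℝ) :=
      two_rpow_le_71.trans h71
    have hA : (0:ℝ) ≤ (A19:ℝ) * (2:ℝ) ^ ((6.149:ℝ) * n) := by positivity
    calc (A19:ℝ) * (2:ℝ)^((6.149:ℝ)*n) * (2:ℝ)^((6.149:ℝ))
        ≤ (Pp (19+n) : ℝ) * (Nat.nth Nat.Prime (19+n) : ℝ) :=
          mul_le_mul ihn h2 (by positivity) (by positivity)
      _ = _ := by norm_num

lemma third : ∀ ω : ℕ, 19 ≤ ω →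
    (A19 : ℝ) * (2 : ℝ) ^ ((6.149 : ℝ) * ((ω : ℝ) - 19)) >
      (2 : ℝ) ^ ((26 / 7 : ℝ) * ((ω : ℝ) + 2.735)) := by
  intro ω hω
  set k : ℝ := (ω : ℝ) - 19 with hk
  have hk0 : 0 ≤ k := by
    have : (19:ℝ) ≤ (ω:ℝ) := by exact_mod_cast hω
    simp [hk]; linarith
  have hsplit : (26/7 : ℝ) * ((ω:ℝ) + 2.735) = 80.73 + (26/7) * k := by
    rw [hk]; ring
  rw [hsplit, Real.rpow_add (by norm_num)]
  have h1 : (2:ℝ) ^ ((26/7:ℝ) * k) ≤ (2:ℝ) ^ ((6.149:ℝ) * k) := by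
    apply Real.rpow_le_rpow_of_exponent_le (by norm_num)
    nlinarith
  calc (2:ℝ)^(80.73:ℝ) * (2:ℝ)^((26/7:ℝ)*k)
      < (A19:ℝ) * (2:ℝ)^((26/7:ℝ)*k) :=
        mul_lt_mul_of_pos_right two_rpow_lt_A19 (by positivity)
    _ ≤ (A19:ℝ) * (2:ℝ)^((6.149:ℝ)*k) :=
        mul_le_mul_of_nonneg_left h1 (by positivity)

theorem stmt_18 (N : ℕ) (hN : 0 < N) (h : 19 ≤ N.primeFactors.card) :
    (N : ℝ) > (2 : ℝ) ^ ((26 / 7 : ℝ) * ((N.primeFactors.card : ℝ) + 2.735)) ∧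
    (N : ℝ) ≥ (A19 : ℝ) * (2 : ℝ) ^ ((6.149 : ℝ) * ((N.primeFactors.card : ℝ) - 19)) ∧
    ∀ ω : ℕ, 19 ≤ ω →
      (A19 : ℝ) * (2 : ℝ) ^ ((6.149 : ℝ) * ((ω : ℝ) - 19)) >
        (2 : ℝ) ^ ((26 / 7 : ℝ) * ((ω : ℝ) + 2.735)) := by
  have hprod : Pp N.primeFactors.card ≤ N := by
    calc Pp N.primeFactors.card ≤ ∏ p ∈ N.primeFactors, p :=
          Pp_le_prod _ (fun p hp => Nat.prime_of_mem_primeFactors hp)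
      _ ≤ N := Nat.le_of_dvd hN (Nat.prod_primeFactors_dvd N)
  have hsecond : (N : ℝ) ≥ (A19 : ℝ) * (2:ℝ) ^ ((6.149:ℝ) * ((N.primeFactors.card : ℝ) - 19)) := by
    have hc : 19 + (N.primeFactors.card - 19) = N.primeFactors.card := by omega
    have hcast : ((N.primeFactors.card : ℝ) - 19) = ((N.primeFactors.card - 19 : ℕ) : ℝ) := by
      push_cast [h]; ring
    rw [hcast]
    calc (A19 : ℝ) * (2:ℝ) ^ ((6.149:ℝ) * ((N.primeFactors.card - 19 : ℕ) : ℝ))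
        ≤ ((Pp (19 + (N.primeFactors.card - 19)) : ℕ) : ℝ) := lemB _
      _ = ((Pp N.primeFactors.card : ℕ) : ℝ) := by rw [hc]
      _ ≤ (N : ℝ) := by exact_mod_cast hprod
  refine ⟨lt_of_lt_of_le (third _ h) hsecond, hsecond, third⟩
end
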